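/- Let L : X → ℝ and let R, R̃ : X → ℝ satisfy: (i) for every x ∈ X there exists x' ∈ X with L(x') = L(x), R̃(x') = R̃(x), and R(x') = 2·R̃(x'); and (ii) R(x) ≥ 2·R̃(x) for all x ∈ X. Then for any λ > 0, the infimum of L + (λ/2)·R over X equals the infimum of L + λ·R̃ over X, and any minimizer of L + (λ/2)·R is a minimizer of L + λ·R̃. -/
import Mathlib


theorem stmt_5 {X : Type*} (L R Rt : X → ℝ) (lam : ℝ) (hlam : 0 < lam)
    (h1 : ∀ x : X, ∃ x' : X, L x' = L x ∧ Rt x' = Rt x ∧ R x' = 2 * Rt x')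
    (h2 : ∀ x : X, R x ≥ 2 * Rt x) :
    (⨅ x : X, (L x + (lam / 2) * R x)) = (⨅ x : X, (L x + lam * Rt x)) ∧
    (∀ x₀ : X, (∀ x : X, L x₀ + (lam / 2) * R x₀ ≤ L x + (lam / 2) * R x) →
      ∀ x : X, L x₀ + lam * Rt x₀ ≤ L x + lam * Rt x) := by
  set f : X → ℝ := fun x => L x + (lam / 2) * R x with hf
  set g : X → ℝ := fun x => L x + lam * Rt x with hg
  have hge : ∀ x, g x ≤ f x := by
    intro x
    have : lam * Rt x ≤ (lam / 2) * R x := by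
      have := h2 x; nlinarith
    simp only [hf, hg]; linarith
  have hsub : Set.range g ⊆ Set.range f := by
    rintro _ ⟨x, rfl⟩
    obtain ⟨x', hL, hRt, hR⟩ := h1 x
    refine ⟨x', ?_⟩
    simp only [hf, hg, hR, hL, hRt]; ring
  constructor
  · by_cases hX : Nonempty X
    · by_cases hbdd : BddBelow (Set.range g)
      · have hbddf : BddBelow (Set.range f) := by
          obtain ⟨c, hc⟩ := hbdd
          exact ⟨c, by rintro _ ⟨x, rfl⟩; exact le_trans (hc ⟨x, rfl⟩) (hge x)⟩
        apply le_antisymm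
        · exact csInf_le_csInf hbddf (Set.range_nonempty g) hsub
        · refine le_csInf (Set.range_nonempty f) ?_
          rintro _ ⟨x, rfl⟩
          exact le_trans (csInf_le hbdd ⟨x, rfl⟩) (hge x)
      · have hbf : ¬ BddBelow (Set.range f) := fun h => hbdd (h.mono hsub)
        rw [iInf, iInf, Real.sInf_of_not_bddBelow hbf, Real.sInf_of_not_bddBelow hbdd]
    · have : IsEmpty X := not_nonempty_iff.mp hX
      simp [iInf, Set.range_eq_empty, Real.sInf_empty]
  · intro x₀ hmin x
    obtain ⟨x', hL, hRt, hR⟩ := h1 x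
    have h1' : f x' = g x := by simp only [hf, hg, hR, hL, hRt]; ring
    calc L x₀ + lam * Rt x₀ = g x₀ := rfl
      _ ≤ f x₀ := hge x₀
      _ ≤ f x' := hmin x'
      _ = g x := h1'
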